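/- Let d ≥ 1 be an integer and let δ > 1. Then there exist R₀ ≥ 2 and constants 0 < c' ≤ C' < ∞ (depending only on d and δ) such that for every R ≥ R₀ one has c'·R^{d(1−δ)}·(log R)^2 ≤ ∫_0^1 min( u^{−1} R^{d(1−δ)} (1 + log₊(u R^{dδ})), 1 ) du ≤ C'·R^{d(1−δ)}·(log R)^2. -/

import Mathlib

open MeasureTheory Real Set

set_option maxHeartbeats 2000000 in
/-- Integrated one-edge escape probability in the boundary regime `γδ = 1`:
`∫_0^1 min(u⁻¹ R^{d(1-δ)}(1 + log₊(u R^{dδ})), 1) du ≍ R^{d(1-δ)} (log R)²`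
for all sufficiently large `R`. -/
theorem stmt_19 (d : ℕ) (hd : 1 ≤ d) (δ : ℝ) (hδ : 1 < δ) :
    ∃ R₀ : ℝ, 2 ≤ R₀ ∧ ∃ c' C' : ℝ, 0 < c' ∧ c' ≤ C' ∧ ∀ R : ℝ, R₀ ≤ R →
      c' * (R ^ ((d : ℝ) * (1 - δ)) * Real.log R ^ 2) ≤
          (∫ u in Ioc (0 : ℝ) 1,
              min (u⁻¹ * R ^ ((d : ℝ) * (1 - δ)) *
                (1 + max (Real.log (u * R ^ ((d : ℝ) * δ))) 0)) 1) ∧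
      (∫ u in Ioc (0 : ℝ) 1,
              min (u⁻¹ * R ^ ((d : ℝ) * (1 - δ)) *
                (1 + max (Real.log (u * R ^ ((d : ℝ) * δ))) 0)) 1) ≤
          C' * (R ^ ((d : ℝ) * (1 - δ)) * Real.log R ^ 2) := by
  have hd1 : (1 : ℝ) ≤ d := by exact_mod_cast hd
  set b : ℝ := d * (δ - 1) with hb
  have hb0 : 0 < b := by
    rw [hb]; nlinarith
  -- eventually `d * log R ≤ R ^ (b/2)`
  have hev : ∀ᶠ R in Filter.atTop, (d : ℝ) * Real.log R ≤ R ^ (b / 2) := by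
    have hlo := isLittleO_log_rpow_atTop (show (0:ℝ) < b / 2 by positivity)
    have hc : (0:ℝ) < 1 / d := by positivity
    filter_upwards [hlo.def hc, Filter.eventually_ge_atTop (1:ℝ)] with x hx hx1
    have h1 : Real.log x ≤ (1 / d) * x ^ (b / 2) := by
      have := hx
      rw [Real.norm_eq_abs, Real.norm_eq_abs, abs_of_nonneg (Real.log_nonneg hx1),
        abs_of_nonneg (Real.rpow_nonneg (by linarith) _)] at this
      exact this
    have hd0 : (0:ℝ) < d := by linarith
    calc (d:ℝ) * Real.log x ≤ (d:ℝ) * ((1/d) * x ^ (b/2)) :=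
          mul_le_mul_of_nonneg_left h1 hd0.le
      _ = x ^ (b/2) := by field_simp
  obtain ⟨N, hN⟩ := Filter.eventually_atTop.mp hev
  refine ⟨max N (max 2 (Real.exp 1)), le_trans (le_max_left _ _) (le_max_right _ _),
    (d : ℝ) * b / 2, (d : ℝ) * b / 2 + (1 + (1 + (d:ℝ) * δ) * b), by positivity,
    by nlinarith [mul_pos (show (0:ℝ) < 1 + (d:ℝ) * δ by nlinarith) hb0], ?_⟩
  intro R hR
  have hRN : N ≤ R := le_trans (le_max_left _ _) hR
  have hR2 : 2 ≤ R := le_trans (le_trans (le_max_left _ _) (le_max_right _ _)) hR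
  have hRe : Real.exp 1 ≤ R := le_trans (le_trans (le_max_right _ _) (le_max_right _ _)) hR
  have hR0 : (0:ℝ) < R := by linarith
  have hR1 : (1:ℝ) ≤ R := by linarith
  have hlogR : 1 ≤ Real.log R := by
    rw [Real.le_log_iff_exp_le hR0]; exact hRe
  have hdl : (d : ℝ) * Real.log R ≤ R ^ (b / 2) := hN R hRN
  set C : ℝ := R ^ ((d : ℝ) * δ) with hCdef
  set A : ℝ := R ^ ((d : ℝ) * (1 - δ)) with hAdef
  have hAe : A = R ^ (-b) := by
    rw [hAdef]; congr 1; rw [hb]; ring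
  have hA0 : 0 < A := Real.rpow_pos_of_pos hR0 _
  have hA1 : A ≤ 1 := by
    rw [hAe]; exact Real.rpow_le_one_of_one_le_of_nonpos hR1 (by linarith)
  have hlogA : Real.log A = -b * Real.log R := by rw [hAe, Real.log_rpow hR0]
  have hlogC : Real.log C = (d : ℝ) * δ * Real.log R := by rw [hCdef, Real.log_rpow hR0]
  have hC0 : 0 < C := Real.rpow_pos_of_pos hR0 _
  set s : ℝ := R ^ (-(b / 2)) with hsdef
  have hs0 : 0 < s := Real.rpow_pos_of_pos hR0 _
  have hs1 : s ≤ 1 := Real.rpow_le_one_of_one_le_of_nonpos hR1 (by linarith)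
  have hlogs : Real.log s = -(b / 2) * Real.log R := by rw [hsdef, Real.log_rpow hR0]
  set f : ℝ → ℝ := fun u => min (u⁻¹ * A * (1 + max (Real.log (u * C)) 0)) 1 with hfdef
  have hfm : Measurable f := by
    apply Measurable.min _ measurable_const
    apply Measurable.mul (Measurable.mul measurable_inv measurable_const)
    exact measurable_const.add
      ((Real.measurable_log.comp (measurable_id.mul_const C)).max measurable_const)
  have hfbound : ∀ u ∈ Ioc (0:ℝ) 1, 0 ≤ f u ∧ f u ≤ 1 := by
    intro u hu
    have hu0 : 0 < u := hu.1
    have hX0 : 0 ≤ u⁻¹ * A * (1 + max (Real.log (u * C)) 0) := by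
      have : (0:ℝ) ≤ 1 + max (Real.log (u * C)) 0 := by
        have := le_max_right (Real.log (u * C)) 0; linarith
      positivity
    exact ⟨le_min hX0 zero_le_one, min_le_right _ _⟩
  have hInt : IntegrableOn f (Ioc (0:ℝ) 1) := by
    refine Integrable.mono' (integrable_const 1) hfm.aestronglyMeasurable ?_
    rw [ae_restrict_iff' measurableSet_Ioc]
    refine ae_of_all _ fun u hu => ?_
    rw [Real.norm_eq_abs, abs_of_nonneg (hfbound u hu).1]
    exact (hfbound u hu).2
  have hf_nonneg : 0 ≤ᵐ[volume.restrict (Ioc (0:ℝ) 1)] f :=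
    (ae_restrict_iff' measurableSet_Ioc).mpr (ae_of_all _ fun u hu => (hfbound u hu).1)
  -- integral of inverse
  have hinv_int : ∀ a : ℝ, 0 < a → a ≤ 1 → IntegrableOn (fun u : ℝ => u⁻¹) (Ioc a 1) := by
    intro a ha ha1
    have : IntervalIntegrable (fun x : ℝ => x⁻¹) volume a 1 := by
      rw [intervalIntegrable_inv_iff]
      right
      rw [Set.uIcc_of_le ha1]
      rintro ⟨h1, -⟩; linarith
    exact this.1
  have hinv_val : ∀ a : ℝ, 0 < a → a ≤ 1 → ∫ u in Ioc a 1, u⁻¹ = -Real.log a := by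
    intro a ha ha1
    rw [← intervalIntegral.integral_of_le ha1, integral_inv]
    · rw [one_div, Real.log_inv]
    · rw [Set.uIcc_of_le ha1]
      rintro ⟨h1, -⟩; linarith
  constructor
  · -- lower bound
    have hsub : Ioc s 1 ⊆ Ioc (0:ℝ) 1 := Ioc_subset_Ioc hs0.le le_rfl
    have step1 : ∫ u in Ioc s 1, f u ≤ ∫ u in Ioc (0:ℝ) 1, f u :=
      setIntegral_mono_set hInt hf_nonneg (HasSubset.Subset.eventuallyLE hsub)
    have ptw : ∀ u ∈ Ioc s 1, (A * ((d:ℝ) * Real.log R)) * u⁻¹ ≤ f u := by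
      intro u hu
      have hsu : s < u := hu.1
      have hu0 : 0 < u := hs0.trans hsu
      have hu1 : u ≤ 1 := hu.2
      refine le_min ?_ ?_
      · -- ≤ X
        have hkey : (d:ℝ) * Real.log R ≤ 1 + max (Real.log (u * C)) 0 := by
          have h1 : Real.log (s * C) ≤ Real.log (u * C) :=
            Real.log_le_log (by positivity) (by nlinarith)
          have h2 : Real.log (s * C) = (-(b/2) + (d:ℝ) * δ) * Real.log R := by
            rw [Real.log_mul hs0.ne' hC0.ne', hlogs, hlogC]; ring
          have h3 : (d:ℝ) * Real.log R ≤ (-(b/2) + (d:ℝ) * δ) * Real.log R := by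
            apply mul_le_mul_of_nonneg_right _ (by linarith)
            rw [hb]; nlinarith
          have h4 : Real.log (u * C) ≤ max (Real.log (u * C)) 0 := le_max_left _ _
          linarith
        calc A * ((d:ℝ) * Real.log R) * u⁻¹
            = (u⁻¹ * A) * ((d:ℝ) * Real.log R) := by ring
          _ ≤ (u⁻¹ * A) * (1 + max (Real.log (u * C)) 0) :=
              mul_le_mul_of_nonneg_left hkey (by positivity)
          _ = u⁻¹ * A * (1 + max (Real.log (u * C)) 0) := by ring
      · -- ≤ 1
        have hui : u⁻¹ ≤ s⁻¹ := by
          apply inv_anti₀ hs0 hsu.le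
        have hAs : A * s⁻¹ = s := by
          rw [hAe, hsdef, ← Real.rpow_neg hR0.le, ← Real.rpow_add hR0]
          congr 1; ring
        have hsR : s * R ^ (b/2) = 1 := by
          rw [hsdef, ← Real.rpow_add hR0]
          simp
        calc A * ((d:ℝ) * Real.log R) * u⁻¹
            ≤ A * ((d:ℝ) * Real.log R) * s⁻¹ := by
              apply mul_le_mul_of_nonneg_left hui
              have : (0:ℝ) ≤ (d:ℝ) * Real.log R := by positivity
              positivity
          _ = (A * s⁻¹) * ((d:ℝ) * Real.log R) := by ring
          _ = s * ((d:ℝ) * Real.log R) := by rw [hAs]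
          _ ≤ s * R ^ (b/2) := mul_le_mul_of_nonneg_left hdl hs0.le
          _ = 1 := hsR
    have hgint : IntegrableOn (fun u : ℝ => (A * ((d:ℝ) * Real.log R)) * u⁻¹) (Ioc s 1) :=
      ((hinv_int s hs0 hs1).const_mul _)
    have step2 : ∫ u in Ioc s 1, (A * ((d:ℝ) * Real.log R)) * u⁻¹ ≤ ∫ u in Ioc s 1, f u :=
      setIntegral_mono_on hgint (hInt.mono_set hsub) measurableSet_Ioc ptw
    have hval : ∫ u in Ioc s 1, (A * ((d:ℝ) * Real.log R)) * u⁻¹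
        = (A * ((d:ℝ) * Real.log R)) * (b/2 * Real.log R) := by
      rw [MeasureTheory.integral_const_mul, hinv_val s hs0 hs1, hlogs]
      ring
    have : (d:ℝ) * b / 2 * (A * Real.log R ^ 2)
        = (A * ((d:ℝ) * Real.log R)) * (b/2 * Real.log R) := by ring
    rw [this, ← hval]
    exact step2.trans step1
  · -- upper bound
    have hsplit : ∫ u in Ioc (0:ℝ) 1, f u
        = (∫ u in Ioc (0:ℝ) A, f u) + ∫ u in Ioc A 1, f u := by
      rw [← Set.Ioc_union_Ioc_eq_Ioc hA0.le hA1]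
      exact setIntegral_union (Set.Ioc_disjoint_Ioc_of_le le_rfl) measurableSet_Ioc
        (hInt.mono_set (by rw [← Set.Ioc_union_Ioc_eq_Ioc hA0.le hA1]; exact subset_union_left))
        (hInt.mono_set (by rw [← Set.Ioc_union_Ioc_eq_Ioc hA0.le hA1]; exact subset_union_right))
    have hsub1 : Ioc (0:ℝ) A ⊆ Ioc (0:ℝ) 1 := Ioc_subset_Ioc le_rfl hA1
    have hsub2 : Ioc A 1 ⊆ Ioc (0:ℝ) 1 := Ioc_subset_Ioc hA0.le le_rfl
    have piece1 : ∫ u in Ioc (0:ℝ) A, f u ≤ A := by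
      have h1 : ∫ u in Ioc (0:ℝ) A, f u ≤ ∫ _u in Ioc (0:ℝ) A, (1:ℝ) := by
        refine setIntegral_mono_on (hInt.mono_set hsub1) ?_ measurableSet_Ioc
          fun u hu => min_le_right _ _
        exact integrableOn_const measure_Ioc_lt_top.ne
      have h2 : ∫ _u in Ioc (0:ℝ) A, (1:ℝ) = A := by
        simp [Real.volume_Ioc, ENNReal.toReal_ofReal hA0.le, hA0.le]
      linarith
    have ptw2 : ∀ u ∈ Ioc A 1, f u ≤ (A * ((1 + (d:ℝ) * δ) * Real.log R)) * u⁻¹ := by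
      intro u hu
      have hu0 : 0 < u := hA0.trans hu.1
      have hu1 : u ≤ 1 := hu.2
      have hkey : 1 + max (Real.log (u * C)) 0 ≤ (1 + (d:ℝ) * δ) * Real.log R := by
        have h1 : Real.log (u * C) ≤ Real.log C :=
          Real.log_le_log (by positivity) (by nlinarith)
        have h2 : (0:ℝ) ≤ (d:ℝ) * δ * Real.log R := by positivity
        have h3 : max (Real.log (u * C)) 0 ≤ (d:ℝ) * δ * Real.log R :=
          max_le (by rw [hlogC] at h1; linarith) h2
        nlinarith
      calc f u ≤ u⁻¹ * A * (1 + max (Real.log (u * C)) 0) := min_le_left _ _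
        _ ≤ (u⁻¹ * A) * ((1 + (d:ℝ) * δ) * Real.log R) :=
            mul_le_mul_of_nonneg_left hkey (by positivity)
        _ = (A * ((1 + (d:ℝ) * δ) * Real.log R)) * u⁻¹ := by ring
    have piece2 : ∫ u in Ioc A 1, f u
        ≤ (A * ((1 + (d:ℝ) * δ) * Real.log R)) * (b * Real.log R) := by
      have h1 : ∫ u in Ioc A 1, f u
          ≤ ∫ u in Ioc A 1, (A * ((1 + (d:ℝ) * δ) * Real.log R)) * u⁻¹ :=
        setIntegral_mono_on (hInt.mono_set hsub2)
          ((hinv_int A hA0 hA1).const_mul _) measurableSet_Ioc ptw2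
      have h2 : ∫ u in Ioc A 1, (A * ((1 + (d:ℝ) * δ) * Real.log R)) * u⁻¹
          = (A * ((1 + (d:ℝ) * δ) * Real.log R)) * (b * Real.log R) := by
        rw [MeasureTheory.integral_const_mul, hinv_val A hA0 hA1, hlogA]
        ring
      linarith
    rw [hsplit]
    have h1le : (1:ℝ) ≤ Real.log R ^ 2 := by nlinarith
    have hAle : A ≤ A * Real.log R ^ 2 := by nlinarith
    have hdb : (0:ℝ) ≤ (d:ℝ) * b / 2 := by nlinarith
    have h0 : (0:ℝ) ≤ (d:ℝ) * b / 2 * (A * Real.log R ^ 2) :=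
      mul_nonneg hdb (mul_nonneg hA0.le (sq_nonneg (Real.log R)))
    nlinarith [piece1, piece2, hAle, h0]
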